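/- Fix a positive integer m and let D be a persistence diagram with fewer than m points (counted with multiplicity). Then the hole detection score s_m is discontinuous at D with respect to the bottleneck distance: s_m(D) = 0, and for every δ > 0 there exists a persistence diagram D' with d_B(D, D') < δ and s_m(D') = 1. -/
import Mathlib


lemma zero_le_fold_max (s : Multiset ℝ) : 0 ≤ s.fold max 0 := by
  induction s using Multiset.induction_on with
  | empty => simp
  | cons a s ih => simp [Multiset.fold_cons_left]; right; exact ih

lemma fold_max_le {s : Multiset ℝ} {c : ℝ} (h0 : 0 ≤ c) (h : ∀ x ∈ s, x ≤ c) :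
    s.fold max 0 ≤ c := by
  induction s using Multiset.induction_on with
  | empty => simpa
  | cons a s ih =>
      simp only [Multiset.fold_cons_left, max_le_iff]
      exact ⟨h a (Multiset.mem_cons_self a s), ih fun x hx => h x (Multiset.mem_cons_of_mem hx)⟩



/-- A persistence diagram: a finite multiset of points `(b, e) ∈ ℝ²` with `b < e`. -/
def IsPersistenceDiagram (D : Multiset (ℝ × ℝ)) : Prop :=
  ∀ x ∈ D, x.1 < x.2

/-- Cost of a partial matching `M` (a multiset of matched pairs whose first and second
projections are sub-multisets of `D` and `D'` respectively): the maximum of the `ℓ∞` distances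
over matched pairs and of half the persistences over unmatched points (`0` for the empty
matching of two empty diagrams). -/
noncomputable def matchingCost (D D' : Multiset (ℝ × ℝ))
    (M : Multiset ((ℝ × ℝ) × (ℝ × ℝ))) : ℝ :=
  ((M.map fun q : (ℝ × ℝ) × (ℝ × ℝ) => max |q.1.1 - q.2.1| |q.1.2 - q.2.2|) +
    ((D - M.map Prod.fst) + (D' - M.map Prod.snd)).map
      fun x : ℝ × ℝ => (x.2 - x.1) / 2).fold max 0

/-- The bottleneck distance between persistence diagrams: the infimum of the costs over all
partial matchings. -/
noncomputable def bottleneckDist (D D' : Multiset (ℝ × ℝ)) : ℝ :=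
  sInf {c : ℝ | ∃ M : Multiset ((ℝ × ℝ) × (ℝ × ℝ)),
    M.map Prod.fst ≤ D ∧ M.map Prod.snd ≤ D' ∧ c = matchingCost D D' M}

/-- `persistenceRank m D`: the `m`-th largest persistence among the points of `D` counted with
multiplicity, defined to be `0` if `D` has fewer than `m` points. -/
noncomputable def persistenceRank (m : ℕ) (D : Multiset (ℝ × ℝ)) : ℝ :=
  let l := (D.map fun x => x.2 - x.1).sort (· ≤ ·)
  if m ≤ l.length then l.getD (l.length - m) 0 else 0

/-- The hole detection score `s_m`. -/
noncomputable def holeDetectionScore (m : ℕ) (D : Multiset (ℝ × ℝ)) : ℝ :=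
  if 0 < persistenceRank m D then
    (persistenceRank m D - persistenceRank (m + 1) D) / persistenceRank m D
  else 0

/-- For a positive integer `m` and a persistence diagram `D` with fewer than
`m` points (counted with multiplicity), the hole detection score `s_m` is discontinuous at `D`:
`s_m(D) = 0`, yet arbitrarily close (in bottleneck distance) diagrams `D'` have `s_m(D') = 1`. -/
theorem holeDetectionScore_discontinuous (m : ℕ) (hm : 1 ≤ m)
    (D : Multiset (ℝ × ℝ)) (hD : IsPersistenceDiagram D) (hcard : Multiset.card D < m) :
    holeDetectionScore m D = 0 ∧
      ∀ δ : ℝ, 0 < δ → ∃ D' : Multiset (ℝ × ℝ), IsPersistenceDiagram D' ∧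
        bottleneckDist D D' < δ ∧ holeDetectionScore m D' = 1 := by
  constructor
  · have hlen : ((D.map fun x => x.2 - x.1).sort (· ≤ ·)).length = Multiset.card D := by
      simp [Multiset.length_sort]
    have h0 : persistenceRank m D = 0 := by
      unfold persistenceRank
      simp only [hlen]
      rw [if_neg (by omega)]
    unfold holeDetectionScore
    rw [h0]
    simp
  · intro δ hδ
    set k := m - Multiset.card D with hk
    have hk1 : 1 ≤ k := by omega
    set D' : Multiset (ℝ × ℝ) := D + Multiset.replicate k (0, δ) with hD'def
    have hD' : IsPersistenceDiagram D' := by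
      intro x hx
      rw [hD'def, Multiset.mem_add] at hx
      rcases hx with hx | hx
      · exact hD x hx
      · rw [Multiset.eq_of_mem_replicate hx]; exact hδ
    refine ⟨D', hD', ?_, ?_⟩
    · -- bottleneck distance < δ
      set M : Multiset ((ℝ × ℝ) × (ℝ × ℝ)) := D.map (fun x => (x, x)) with hM
      have hfst : M.map Prod.fst = D := by
        rw [hM, Multiset.map_map]; simp
      have hsnd : M.map Prod.snd = D := by
        rw [hM, Multiset.map_map]; simp
      have hcost : matchingCost D D' M ≤ δ / 2 := by
        unfold matchingCost
        apply fold_max_le (by linarith)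
        intro x hx
        rw [Multiset.mem_add] at hx
        rcases hx with hx | hx
        · rw [hM, Multiset.map_map, Multiset.mem_map] at hx
          obtain ⟨y, _, hy⟩ := hx
          simp at hy
          rw [← hy]; positivity
        · rw [Multiset.mem_map] at hx
          obtain ⟨y, hy, hyx⟩ := hx
          rw [hfst, hsnd, tsub_self, hD'def, add_tsub_cancel_left,
            zero_add] at hy
          rw [Multiset.eq_of_mem_replicate hy] at hyx
          simp at hyx
          linarith [hyx]
      have hmem : matchingCost D D' M ∈ {c : ℝ | ∃ M : Multiset ((ℝ × ℝ) × (ℝ × ℝ)),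
          M.map Prod.fst ≤ D ∧ M.map Prod.snd ≤ D' ∧ c = matchingCost D D' M} := by
        exact ⟨M, le_of_eq hfst, by rw [hsnd, hD'def]; exact Multiset.le_add_right _ _, rfl⟩
      have hbdd : BddBelow {c : ℝ | ∃ M : Multiset ((ℝ × ℝ) × (ℝ × ℝ)),
          M.map Prod.fst ≤ D ∧ M.map Prod.snd ≤ D' ∧ c = matchingCost D D' M} := by
        refine ⟨0, fun c hc => ?_⟩
        obtain ⟨N, _, _, rfl⟩ := hc
        exact zero_le_fold_max _
      calc bottleneckDist D D' ≤ matchingCost D D' M := csInf_le hbdd hmem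
        _ ≤ δ / 2 := hcost
        _ < δ := by linarith
    · -- score = 1
      set l := ((D'.map fun x => x.2 - x.1).sort (· ≤ ·)) with hl
      have hlen : l.length = m := by
        rw [hl]
        simp [hD'def]
        omega
      have hm1 : persistenceRank (m + 1) D' = 0 := by
        unfold persistenceRank
        rw [← hl]
        rw [if_neg (by omega)]
      have hpos : 0 < persistenceRank m D' := by
        unfold persistenceRank
        rw [← hl, if_pos (le_of_eq hlen.symm), hlen, Nat.sub_self]
        have hne : l ≠ [] := by
          intro h; rw [h] at hlen; simp at hlen; omega
        have : l.getD 0 0 ∈ l := by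
          rw [List.getD_eq_getElem l 0 (by rw [hlen]; omega)]
          exact List.getElem_mem _
        rw [hl, Multiset.mem_sort, Multiset.mem_map] at this
        obtain ⟨y, hy, hyx⟩ := this
        rw [← hyx]
        have := hD' y hy
        linarith
      unfold holeDetectionScore
      rw [if_pos hpos, hm1, sub_zero, div_self (ne_of_gt hpos)]
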